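/- Let f ∈ C^{1,α}([0,1]) with α ∈ (0,1], ‖f‖_{L∞([0,1])} ≤ A and ‖f'‖_{C^{0,α}([0,1])} ≤ B, where 0 < A ≤ B. Then the C^{α/2}-Hölder seminorm of f' satisfies [f']_{C^{α/2}([0,1])} ≤ (12 B^{1/(1+α)} + B) A^{α/(2(1+α))}. -/

import Mathlib

open Set

/-- If `‖f‖_{L∞([0,1])} ≤ A` and `‖f'‖_{C^{0,α}([0,1])} ≤ B` (decomposed as sup-norm bound `M`
plus Hölder seminorm bound `S` with `M + S ≤ B`), with `0 < A ≤ B`, then the `C^{α/2}` Hölder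
seminorm of `f'` is at most `(12 B^{1/(1+α)} + B) A^{α/(2(1+α))}`. -/
theorem stmt1 (f f' : ℝ → ℝ) (α A B M S : ℝ)
    (hα0 : 0 < α) (hα1 : α ≤ 1) (hA : 0 < A) (hAB : A ≤ B)
    (hderiv : ∀ x ∈ Icc (0:ℝ) 1, HasDerivWithinAt f (f' x) (Icc (0:ℝ) 1) x)
    (hf : ∀ x ∈ Icc (0:ℝ) 1, |f x| ≤ A)
    (hM0 : 0 ≤ M) (hS0 : 0 ≤ S)
    (hM : ∀ x ∈ Icc (0:ℝ) 1, |f' x| ≤ M)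
    (hS : ∀ x ∈ Icc (0:ℝ) 1, ∀ y ∈ Icc (0:ℝ) 1, |f' x - f' y| ≤ S * |x - y| ^ α)
    (hMS : M + S ≤ B) :
    ∀ x ∈ Icc (0:ℝ) 1, ∀ y ∈ Icc (0:ℝ) 1,
      |f' x - f' y| ≤
        (12 * B ^ (1 / (1 + α)) + B) * A ^ (α / (2 * (1 + α))) * |x - y| ^ (α / 2) := by
  have hB : (0:ℝ) < B := lt_of_lt_of_le hA hAB
  have h1α : (0:ℝ) < 1 + α := by linarith
  have hSB : S ≤ B := by linarith
  -- sup bound on f' via MVT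
  have key : ∀ h : ℝ, 0 < h → h ≤ 1 → ∀ z ∈ Icc (0:ℝ) 1, |f' z| ≤ 2*A/h + S*h^α := by
    intro h hh0 hh1 z hz
    set a := min z (1 - h) with ha
    have ha0 : 0 ≤ a := le_min hz.1 (by linarith)
    have hah : a + h ≤ 1 := by have := min_le_right z (1-h); linarith
    have haz : a ≤ z := min_le_left _ _
    have hza : z ≤ a + h := by
      rcases le_total z (1 - h) with h1 | h1
      · have h2 : a = z := min_eq_left h1
        linarith
      · have h2 : a = 1 - h := min_eq_right h1
        have := hz.2; linarith
    have hsub : Icc a (a+h) ⊆ Icc (0:ℝ) 1 := Icc_subset_Icc ha0 hah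
    have hcont : ContinuousOn f (Icc a (a+h)) := fun w hw =>
      ((hderiv w (hsub hw)).continuousWithinAt).mono hsub
    have hderiv' : ∀ w ∈ Ioo a (a+h), HasDerivAt f (f' w) w := by
      intro w hw
      have hw01 : w ∈ Ioo (0:ℝ) 1 := ⟨lt_of_le_of_lt ha0 hw.1, lt_of_lt_of_le hw.2 hah⟩
      exact (hderiv w (Ioo_subset_Icc_self hw01)).hasDerivAt
        (Icc_mem_nhds hw01.1 hw01.2)
    obtain ⟨ξ, hξ, hξeq⟩ := exists_hasDerivAt_eq_slope f f'
      (by linarith : a < a + h) hcont hderiv'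
    have hξ01 : ξ ∈ Icc (0:ℝ) 1 := hsub (Ioo_subset_Icc_self hξ)
    have hξbd : |f' ξ| ≤ 2 * A / h := by
      have h1 : |f (a+h) - f a| ≤ 2 * A := by
        have e1 := hf (a+h) (hsub (right_mem_Icc.2 (by linarith)))
        have e2 := hf a (hsub (left_mem_Icc.2 (by linarith)))
        calc |f (a+h) - f a| ≤ |f (a+h)| + |f a| := abs_sub _ _
          _ ≤ 2 * A := by linarith
      rw [hξeq, show a + h - a = h by ring, abs_div, abs_of_pos hh0]
      gcongr
    have hdist : |z - ξ| ≤ h := by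
      rw [abs_le]
      constructor <;> [nlinarith [hξ.1, hξ.2]; nlinarith [hξ.1, hξ.2]]
    have hdiff : |f' z - f' ξ| ≤ S * h ^ α := by
      calc |f' z - f' ξ| ≤ S * |z - ξ| ^ α := hS z hz ξ hξ01
        _ ≤ S * h ^ α := by
          gcongr
          all_goals first
            | exact Real.rpow_le_rpow (abs_nonneg _) hdist hα0.le
            | positivity
    calc |f' z| = |(f' z - f' ξ) + f' ξ| := by ring_nf
      _ ≤ |f' z - f' ξ| + |f' ξ| := abs_add_le _ _
      _ ≤ 2*A/h + S*h^α := by linarith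
  -- choose h
  set c : ℝ := 1/(1+α) with hcdef
  have hc0 : 0 < c := by positivity
  have hc1 : c * (1 + α) = 1 := by rw [hcdef]; field_simp
  have hαc : α * c = 1 - c := by nlinarith
  have hAB1 : A / B ≤ 1 := div_le_one_of_le₀ hAB hB.le
  set h : ℝ := (A/B) ^ c with hhdef
  have hABpos : 0 < A / B := div_pos hA hB
  have hh0 : 0 < h := Real.rpow_pos_of_pos hABpos c
  have hh1 : h ≤ 1 := Real.rpow_le_one hABpos.le hAB1 hc0.le
  have hAcpos : (0:ℝ) < A ^ c := Real.rpow_pos_of_pos hA c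
  have hBcpos : (0:ℝ) < B ^ c := Real.rpow_pos_of_pos hB c
  have hheq : h = A ^ c / B ^ c := by rw [hhdef, Real.div_rpow hA.le hB.le]
  have hAsplit : A / A ^ c = A ^ (α * c) := by
    rw [hαc, Real.rpow_sub hA, Real.rpow_one]
  have hBαc : (0:ℝ) < B ^ (α * c) := Real.rpow_pos_of_pos hB _
  have hBsplit : B ^ c * B ^ (α * c) = B := by
    rw [← Real.rpow_add hB, show c + α * c = 1 by linarith, Real.rpow_one]
  have hsup : ∀ z ∈ Icc (0:ℝ) 1, |f' z| ≤ 3 * (B ^ c * A ^ (α * c)) := by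
    intro z hz
    have hk := key h hh0 hh1 z hz
    have e1 : 2 * A / h = 2 * (B ^ c * A ^ (α * c))  := by
      rw [hheq, ← hAsplit]
      field_simp
    have e2 : S * h ^ α ≤ B ^ c * A ^ (α * c) := by
      have eh : h ^ α = A ^ (α * c) / B ^ (α * c) := by
        rw [hheq, Real.div_rpow hAcpos.le hBcpos.le,
          ← Real.rpow_mul hA.le, ← Real.rpow_mul hB.le, mul_comm c α]
      calc S * h ^ α ≤ B * h ^ α := by
            gcongr
            all_goals positivity
        _ = B ^ c * A ^ (α * c) := by
            rw [eh]; field_simp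
            linear_combination -hBsplit
    linarith
  -- main case split
  intro x hx y hy
  set t : ℝ := |x - y| with htdef
  have ht0 : 0 ≤ t := abs_nonneg _
  have hexp : α / (2 * (1 + α)) = α * c / 2 := by
    rw [hcdef, mul_one_div, div_div, mul_comm (1+α) 2]
  have hApos2 : (0:ℝ) < A ^ (α * c / 2) := Real.rpow_pos_of_pos hA _
  have hAhalf : A ^ (α * c) = A ^ (α * c / 2) * A ^ (α * c / 2) := by
    rw [← Real.rpow_add hA, show α * c / 2 + α * c / 2 = α * c from by ring]
  rcases eq_or_lt_of_le ht0 with ht0' | htpos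
  · have hxy : x = y := by
      have : |x - y| = 0 := ht0'.symm
      have := abs_eq_zero.mp this
      linarith
    subst hxy
    simp only [sub_self, abs_zero]
    positivity
  · have htpow : (0:ℝ) < t ^ (α/2) := Real.rpow_pos_of_pos htpos _
    have htsplit : t ^ α = t ^ (α/2) * t ^ (α/2) := by
      rw [← Real.rpow_add htpos, show α / 2 + α / 2 = α from by ring]
    rw [hexp]
    rcases le_total (A ^ c) t with hcase | hcase
    · -- large t : use sup bound
      have hb : |f' x - f' y| ≤ 6 * (B ^ c * A ^ (α * c)) := by
        have := hsup x hx
        have := hsup y hy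
        calc |f' x - f' y| ≤ |f' x| + |f' y| := abs_sub _ _
          _ ≤ 6 * (B ^ c * A ^ (α * c)) := by linarith
      have hAt : A ^ (α * c / 2) ≤ t ^ (α / 2) := by
        have : (A ^ c) ^ (α / 2) ≤ t ^ (α / 2) :=
          Real.rpow_le_rpow hAcpos.le hcase (by positivity)
        rwa [← Real.rpow_mul hA.le, show c * (α/2) = α * c / 2 by ring] at this
      calc |f' x - f' y| ≤ 6 * (B ^ c * A ^ (α * c)) := hb
        _ = 6 * B ^ c * A ^ (α * c / 2) * A ^ (α * c / 2) := by rw [hAhalf]; ring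
        _ ≤ 6 * B ^ c * A ^ (α * c / 2) * t ^ (α / 2) := by
            gcongr
            all_goals positivity
        _ ≤ (12 * B ^ c + B) * A ^ (α * c / 2) * t ^ (α / 2) := by
            have h6 : 6 * B ^ c ≤ 12 * B ^ c + B := by linarith [hBcpos, hB]
            exact mul_le_mul_of_nonneg_right
              (mul_le_mul_of_nonneg_right h6 hApos2.le) htpow.le
    · -- small t : use Hölder bound
      have hAt : t ^ (α / 2) ≤ A ^ (α * c / 2) := by
        have : t ^ (α / 2) ≤ (A ^ c) ^ (α / 2) :=
          Real.rpow_le_rpow ht0 hcase (by positivity)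
        rwa [← Real.rpow_mul hA.le, show c * (α/2) = α * c / 2 by ring] at this
      calc |f' x - f' y| ≤ S * t ^ α := hS x hx y hy
        _ ≤ B * t ^ α := by gcongr; all_goals positivity
        _ = B * t ^ (α/2) * t ^ (α/2) := by rw [htsplit]; ring
        _ ≤ B * A ^ (α * c / 2) * t ^ (α/2) := by
            gcongr
            all_goals positivity
        _ ≤ (12 * B ^ c + B) * A ^ (α * c / 2) * t ^ (α / 2) := by
            have hBle : B ≤ 12 * B ^ c + B := by linarith [hBcpos]
            exact mul_le_mul_of_nonneg_right
              (mul_le_mul_of_nonneg_right hBle hApos2.le) htpow.le
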